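/- A Coxeter group of rank n (with Coxeter system (W,S), |S| = n) cannot be generated by fewer than n reflections, where a reflection is any conjugate of an element of S. -/

import Mathlib

set_option linter.unusedSectionVars false
open Real

namespace CoxProof

variable {B : Type*} [Fintype B] [DecidableEq B]

/-- entries of the bilinear form -/
noncomputable def geomK (M : CoxeterMatrix B) (i j : B) : ℝ :=
  if M i j = 0 then -1 else -Real.cos (Real.pi / M i j)

/-- the simple "root" -/
def alpha (i : B) : B → ℝ := Pi.single i 1

/-- the linear functional ⟨αᵢ, ·⟩ -/
noncomputable def geomF (M : CoxeterMatrix B) (i : B) : (B → ℝ) →ₗ[ℝ] ℝ :=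
  ∑ j, geomK M i j • LinearMap.proj j

lemma geomF_apply (M : CoxeterMatrix B) (i : B) (v : B → ℝ) :
    geomF M i v = ∑ j, geomK M i j * v j := by
  simp [geomF]

lemma geomK_symm (M : CoxeterMatrix B) (i j : B) : geomK M i j = geomK M j i := by
  unfold geomK
  rw [show M.M i j = M.M j i from M.isSymm.apply j i]

lemma geomK_diag (M : CoxeterMatrix B) (i : B) : geomK M i i = 1 := by
  simp [geomK, M.diagonal i]

lemma geomF_alpha (M : CoxeterMatrix B) (i j : B) : geomF M i (alpha j) = geomK M i j := by
  rw [geomF_apply]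
  simp [alpha, Pi.single_apply]

/-- the geometric reflection -/
noncomputable def geomSigma (M : CoxeterMatrix B) (i : B) : Module.End ℝ (B → ℝ) :=
  LinearMap.id - (LinearMap.toSpanSingleton ℝ (B → ℝ) (alpha i)).comp (2 • geomF M i)

lemma geomSigma_apply (M : CoxeterMatrix B) (i : B) (v : B → ℝ) :
    geomSigma M i v = v - (2 * geomF M i v) • alpha i := by
  simp [geomSigma, LinearMap.toSpanSingleton_apply, mul_smul]

lemma geomSigma_alpha_self (M : CoxeterMatrix B) (i : B) :
    geomSigma M i (alpha i) = -alpha i := by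
  rw [geomSigma_apply, geomF_alpha, geomK_diag]
  module

lemma geomSigma_alpha (M : CoxeterMatrix B) (i j : B) :
    geomSigma M i (alpha j) = alpha j - (2 * geomK M i j) • alpha i := by
  rw [geomSigma_apply, geomF_alpha]

lemma geomSigma_fixed (M : CoxeterMatrix B) (i : B) {v : B → ℝ} (h : geomF M i v = 0) :
    geomSigma M i v = v := by
  rw [geomSigma_apply, h]; simp

lemma geomSigma_sq (M : CoxeterMatrix B) (i : B) : geomSigma M i * geomSigma M i = 1 := by
  refine LinearMap.ext fun v => ?_
  rw [Module.End.mul_apply, Module.End.one_apply, geomSigma_apply, geomSigma_apply, map_sub,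
    map_smul, geomF_alpha, geomK_diag]
  simp only [smul_eq_mul, mul_one]
  module


section TwoGen

variable (M : CoxeterMatrix B) (i j : B)

lemma trig2' (x θ : ℝ) : sin (x + θ) = 2 * cos θ * sin x - sin (x - θ) := by
  rw [sin_add, sin_sub]; ring

lemma trig1' (x θ : ℝ) : sin (x + 2*θ) = (4 * cos θ ^ 2 - 1) * sin x - 2 * cos θ * sin (x - θ) := by
  rw [show x + 2*θ = x + θ + θ by ring, sin_add, sin_add, cos_add, sin_sub]
  linear_combination (-(sin x)) * sin_sq_add_cos_sq θ

lemma geomK_off (hm : M.M i j ≠ 0) : geomK M i j = -Real.cos (Real.pi / M i j) := by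
  unfold geomK
  rw [if_neg hm]

lemma g_alpha_i (hm : M.M i j ≠ 0) :
    (geomSigma M i * geomSigma M j) (alpha i) =
      (4 * Real.cos (Real.pi / M i j) ^ 2 - 1) • alpha i +
        (2 * Real.cos (Real.pi / M i j)) • alpha j := by
  have hk : geomK M i j = -Real.cos (Real.pi / M i j) := geomK_off M i j hm
  have hk' : geomK M j i = -Real.cos (Real.pi / M i j) := by rw [← geomK_symm]; exact hk
  rw [Module.End.mul_apply, geomSigma_alpha, map_sub, map_smul, geomSigma_alpha_self,
    geomSigma_alpha, hk, hk']
  module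

lemma g_alpha_j (hm : M.M i j ≠ 0) :
    (geomSigma M i * geomSigma M j) (alpha j) =
      (-(2 * Real.cos (Real.pi / M i j))) • alpha i + (-1 : ℝ) • alpha j := by
  have hk : geomK M i j = -Real.cos (Real.pi / M i j) := geomK_off M i j hm
  rw [Module.End.mul_apply, geomSigma_alpha_self, map_neg, geomSigma_alpha, hk]
  module

lemma pow_sine (hm : M.M i j ≠ 0) (k : ℕ) :
    sin (π / M i j) • ((geomSigma M i * geomSigma M j) ^ k) (alpha i) =
        sin (2*k*(π / M i j) + (π / M i j)) • alpha i + sin (2*k*(π / M i j)) • alpha j ∧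
      sin (π / M i j) • ((geomSigma M i * geomSigma M j) ^ k) (alpha j) =
        (-sin (2*k*(π / M i j))) • alpha i + (-sin (2*k*(π / M i j) - (π / M i j))) • alpha j := by
  set θ := π / M i j with hθ
  set g := geomSigma M i * geomSigma M j with hg
  induction k with
  | zero =>
    constructor
    · simp
    · push_cast
      rw [show 2*(0:ℝ)*θ - θ = -θ by ring]
      simp [sin_neg]
  | succ k ih =>
    obtain ⟨ihA, ihB⟩ := ih
    have hgi := g_alpha_i M i j hm
    have hgj := g_alpha_j M i j hm
    rw [← hθ] at hgi hgj
    have expand : ∀ x : B → ℝ, (g ^ (k+1)) x = g ((g ^ k) x) := by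
      intro x
      rw [pow_succ', Module.End.mul_apply]
    constructor
    · rw [expand, ← map_smul, ihA, map_add, map_smul, map_smul, hgi, hgj]
      push_cast
      rw [show 2*((k:ℝ)+1)*θ + θ = (2*k*θ + θ) + 2*θ by ring,
        show 2*((k:ℝ)+1)*θ = (2*k*θ + θ) + θ by ring,
        trig1' (2*k*θ + θ) θ, trig2' (2*k*θ + θ) θ,
        show 2*(k:ℝ)*θ + θ - θ = 2*k*θ by ring]
      module
    · rw [expand, ← map_smul, ihB, map_add, map_smul, map_smul, hgi, hgj]
      push_cast
      rw [show 2*((k:ℝ)+1)*θ = (2*k*θ) + 2*θ by ring,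
        show 2*(k:ℝ)*θ + 2*θ - θ = (2*k*θ) + θ by ring,
        trig1' (2*k*θ) θ, trig2' (2*k*θ) θ]
      module


lemma g_pow_m (hm2 : 2 ≤ M.M i j) :
    (geomSigma M i * geomSigma M j) ^ (M.M i j) = 1 := by
  have hm0 : M.M i j ≠ 0 := by omega
  set m : ℕ := M.M i j with hmdef
  set θ : ℝ := π / m with hθ
  set g := geomSigma M i * geomSigma M j with hg
  have hmR : (0:ℝ) < (m:ℝ) := by exact_mod_cast Nat.pos_of_ne_zero hm0
  have hθpos : 0 < θ := div_pos pi_pos hmR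
  have hθlt : θ < π := by
    rw [hθ]
    calc π / (m:ℝ) ≤ π / 2 := by
          apply div_le_div_of_nonneg_left pi_pos.le two_pos
          exact_mod_cast hm2
      _ < π := by linarith [pi_pos]
  have hsin : 0 < sin θ := sin_pos_of_pos_of_lt_pi hθpos hθlt
  have h2π : 2*(m:ℝ)*θ = 2*π := by
    rw [hθ]; field_simp
  have hA := (pow_sine M i j hm0 m).1
  have hB := (pow_sine M i j hm0 m).2
  rw [← hmdef] at hA hB
  rw [← hθ] at hA hB
  rw [← hg] at hA hB
  rw [h2π, show 2*π + θ = θ + 2*π by ring, sin_add_two_pi, sin_two_pi] at hA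
  rw [h2π, sin_two_pi, sin_two_pi_sub] at hB
  rw [zero_smul, add_zero] at hA
  simp only [neg_zero, zero_smul, zero_add, neg_neg] at hB
  have hgi : (g ^ m) (alpha i) = alpha i := smul_right_injective (B → ℝ) hsin.ne' hA
  have hgj : (g ^ m) (alpha j) = alpha j := smul_right_injective (B → ℝ) hsin.ne' hB
  refine LinearMap.ext fun v => ?_
  set c : ℝ := cos θ with hc
  set d : ℝ := sin θ ^ 2 with hd
  have hd0 : d ≠ 0 := pow_ne_zero 2 hsin.ne'
  have hd1 : d = 1 - c^2 := by rw [hd, hc, sin_sq]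
  set a : ℝ := geomF M i v with ha
  set b : ℝ := geomF M j v with hb
  set p : ℝ := (a + c*b)/d with hp
  set q : ℝ := (c*a + b)/d with hq
  have hkij : geomK M i j = -c := by rw [geomK_off M i j hm0, ← hθ, ← hc]
  have hkji : geomK M j i = -c := by rw [← geomK_symm]; exact hkij
  have hfii : geomF M i (alpha i) = 1 := by rw [geomF_alpha, geomK_diag]
  have hfjj : geomF M j (alpha j) = 1 := by rw [geomF_alpha, geomK_diag]
  have hfij : geomF M i (alpha j) = -c := by rw [geomF_alpha]; exact hkij
  have hfji : geomF M j (alpha i) = -c := by rw [geomF_alpha]; exact hkji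
  set u : B → ℝ := v - p • alpha i - q • alpha j with hu
  have hfiu : geomF M i u = 0 := by
    rw [hu, map_sub, map_sub, map_smul, map_smul, hfii, hfij, ← ha]
    rw [hp, hq, hd1]
    have hc2 : 1 - c^2 ≠ 0 := by rw [← hd1]; exact hd0
    field_simp
    linear_combination (-a) * mul_inv_cancel₀ hc2
  have hfju : geomF M j u = 0 := by
    rw [hu, map_sub, map_sub, map_smul, map_smul, hfji, hfjj, ← hb]
    rw [hp, hq, hd1]
    have hc2 : 1 - c^2 ≠ 0 := by rw [← hd1]; exact hd0
    field_simp
    linear_combination (-b) * mul_inv_cancel₀ hc2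
  have hgu : g u = u := by
    rw [hg, Module.End.mul_apply, geomSigma_fixed M j hfju, geomSigma_fixed M i hfiu]
  have hgku : (g ^ m) u = u := by
    have key : ∀ n : ℕ, (g ^ n) u = u := by
      intro n
      induction n with
      | zero => simp
      | succ n ihn => rw [pow_succ, Module.End.mul_apply, hgu, ihn]
    exact key m
  have hv : v = u + p • alpha i + q • alpha j := by rw [hu]; module
  rw [Module.End.one_apply]
  conv_lhs => rw [hv]
  rw [map_add, map_add, map_smul, map_smul, hgi, hgj, hgku, ← hv]

end TwoGen

/-- liftability of the geometric representation -/
lemma isLiftable (M : CoxeterMatrix B) : M.IsLiftable (geomSigma M) := by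
  intro i i'
  rcases eq_or_ne i i' with rfl | h
  · rw [M.diagonal, pow_one, geomSigma_sq]
  · rcases Nat.eq_zero_or_pos (M.M i i') with h0 | hpos
    · rw [show M.M i i' = M i i' from rfl] at h0
      rw [h0, pow_zero]
    · have h1 : M.M i i' ≠ 1 := M.off_diagonal i i' h
      exact g_pow_m M i i' (by omega)

end CoxProof

open CoxProof

/-- A Coxeter group of rank `n` cannot be generated by fewer than `n` reflections:
if `(W, S)` is a Coxeter system with `|S| = n` and `T` is a finite set of reflections
(conjugates of simple reflections) generating `W`, then `|T| ≥ n`. -/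
theorem coxeter_not_generated_by_fewer_reflections
    {B : Type*} [Fintype B] {W : Type*} [Group W]
    {M : CoxeterMatrix B} (cs : CoxeterSystem M W)
    (T : Finset W) (hrefl : ∀ t ∈ T, cs.IsReflection t)
    (hgen : Subgroup.closure (T : Set W) = ⊤) :
    Fintype.card B ≤ T.card := by
  classical
  set ρ : W →* Module.End ℝ (B → ℝ) := cs.lift ⟨geomSigma M, isLiftable M⟩ with hρ
  have hρs : ∀ i, ρ (cs.simple i) = geomSigma M i := fun i => cs.lift_apply_simple _ i
  have hρinv : ∀ (x : W) (v : B → ℝ), ρ x (ρ x⁻¹ v) = v := by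
    intro x v
    have : ρ x * ρ x⁻¹ = 1 := by rw [← map_mul, mul_inv_cancel, map_one]
    calc ρ x (ρ x⁻¹ v) = (ρ x * ρ x⁻¹) v := rfl
      _ = v := by rw [this, Module.End.one_apply]
  choose wfun ifun hwi using fun (t : {x // x ∈ T}) => hrefl t t.2
  set vfun : {x // x ∈ T} → (B → ℝ) := fun t => ρ (wfun t) (alpha (ifun t)) with hvfun
  set U : Submodule ℝ (B → ℝ) := Submodule.span ℝ (Set.range vfun) with hU
  have hkey : ∀ (x : W) (v : B → ℝ), ρ x v - v ∈ U := by
    intro x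
    have hx : x ∈ Subgroup.closure (T : Set W) := by rw [hgen]; trivial
    refine Subgroup.closure_induction ?_ ?_ ?_ ?_ hx
    · -- elements of T
      intro t ht v
      have hwt : t = wfun ⟨t, ht⟩ * cs.simple (ifun ⟨t, ht⟩) * (wfun ⟨t, ht⟩)⁻¹ := hwi ⟨t, ht⟩
      set w₀ := wfun ⟨t, ht⟩ with hw₀
      set i₀ := ifun ⟨t, ht⟩ with hi₀
      set u : B → ℝ := ρ w₀⁻¹ v with hu
      have hv : ρ w₀ u = v := hρinv _ v
      have h1 : ρ t v = ρ w₀ (geomSigma M i₀ u) := by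
        rw [hwt, map_mul, map_mul, hρs]
        rfl
      have h2 : ρ t v - v = (-(2 * geomF M i₀ u)) • vfun ⟨t, ht⟩ := by
        rw [h1, geomSigma_apply, map_sub, map_smul, hv]
        simp only [hvfun, ← hw₀, ← hi₀]
        module
      rw [h2]
      exact U.smul_mem _ (Submodule.subset_span ⟨⟨t, ht⟩, rfl⟩)
    · intro v
      rw [map_one, Module.End.one_apply, sub_self]
      exact U.zero_mem
    · intro x y _ _ ihx ihy v
      have : ρ (x * y) v - v = (ρ x (ρ y v) - ρ y v) + (ρ y v - v) := by
        rw [map_mul, Module.End.mul_apply]; abel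
      rw [this]
      exact U.add_mem (ihx (ρ y v)) (ihy v)
    · intro x _ ihx v
      have : ρ x⁻¹ v - v = -(ρ x (ρ x⁻¹ v) - ρ x⁻¹ v) := by rw [hρinv]; abel
      rw [this]
      exact U.neg_mem (ihx (ρ x⁻¹ v))
  have halpha : ∀ b : B, alpha b ∈ U := by
    intro b
    have h1 := hkey (cs.simple b) (alpha b)
    rw [hρs, geomSigma_alpha_self] at h1
    have h2 : (-2 : ℝ) • alpha b ∈ U := by
      rw [show (-2 : ℝ) • alpha b = -alpha b - alpha b by module]
      exact h1
    have h3 := U.smul_mem (-2⁻¹ : ℝ) h2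
    rwa [smul_smul, show (-2⁻¹ : ℝ) * (-2) = 1 by norm_num, one_smul] at h3
  have hUtop : U = ⊤ := by
    refine le_antisymm le_top ?_
    rw [← (Pi.basisFun ℝ B).span_eq]
    refine Submodule.span_le.mpr ?_
    rintro _ ⟨b, rfl⟩
    rw [Pi.basisFun_apply]
    exact halpha b
  calc Fintype.card B = Module.finrank ℝ (B → ℝ) := (Module.finrank_pi ℝ).symm
    _ = Module.finrank ℝ U := by rw [hUtop, finrank_top]
    _ = (Set.range vfun).finrank ℝ := rfl
    _ ≤ Fintype.card {x // x ∈ T} := finrank_range_le_card vfun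
    _ = T.card := Fintype.card_coe T
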